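/- Let y be an aperiodic infinite binary word and k ≥ 0 an integer. Then for all n ≤ 2^k, the set of length-n factors of φ^k(y) equals the set of length-n factors of the Thue–Morse word t: Fac_n(φ^k(y)) = Fac_n(t). -/

import Mathlib

/-- The number of occurrences of `w` as a (scattered) subword of `u`:
the binomial coefficient of the words `u` and `w`. -/
def wordBinom {A : Type*} [DecidableEq A] (u w : List A) : ℕ := u.sublists.count w

/-- `k`-binomial equivalence of finite words: all binomial coefficients with respect to
words of length at most `k` agree. -/
def BinEquiv {A : Type*} [DecidableEq A] (k : ℕ) (u v : List A) : Prop :=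
  ∀ x : List A, x.length ≤ k → wordBinom u x = wordBinom v x

/-- `k`-binomial equivalence as a setoid. -/
def binSetoid (A : Type*) [DecidableEq A] (k : ℕ) : Setoid (List A) where
  r := BinEquiv k
  iseqv := ⟨fun _ _ _ => rfl, fun h x hx => (h x hx).symm,
    fun h h' x hx => (h x hx).trans (h' x hx)⟩

/-- `u` occurs in the infinite word `x` at position `i`. -/
def OccursAt {A : Type*} (u : List A) (x : ℕ → A) (i : ℕ) : Prop :=
  u = (List.range u.length).map (fun j => x (i + j))

/-- `u` is a factor of the infinite word `x`. -/
def FactorOf {A : Type*} (u : List A) (x : ℕ → A) : Prop := ∃ i, OccursAt u x i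

/-- The set of length-`n` factors of `x`. -/
def Fac {A : Type*} (x : ℕ → A) (n : ℕ) : Set (List A) :=
  {u | u.length = n ∧ FactorOf u x}

/-- Factor complexity of an infinite word. -/
noncomputable def fc {A : Type*} (x : ℕ → A) (n : ℕ) : ℕ := (Fac x n).ncard

/-- `k`-binomial complexity of an infinite word: the number of `k`-binomial equivalence
classes of length-`n` factors. -/
noncomputable def bc {A : Type*} [DecidableEq A] (x : ℕ → A) (k n : ℕ) : ℕ :=
  (Quotient.mk (binSetoid A k) '' Fac x n).ncard

/-- The Thue–Morse morphism `φ : 0 ↦ 01, 1 ↦ 10`. -/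
def phi : Fin 2 → List (Fin 2) := fun a => if a = 0 then [0, 1] else [1, 0]

/-- The Thue–Morse morphism applied to a finite word. -/
def phiW : List (Fin 2) → List (Fin 2) := fun u => (u.map phi).flatten

/-- The `k`-th power `φ^k` of the Thue–Morse morphism, on finite words. -/
def phiPow (k : ℕ) : List (Fin 2) → List (Fin 2) := phiW^[k]

/-- `φ^k` applied to an infinite binary word (note `φ^k` is `2^k`-uniform). -/
def phiPowInf (k : ℕ) (y : ℕ → Fin 2) : ℕ → Fin 2 :=
  fun n => (phiPow k [y (n / 2 ^ k)]).getD (n % 2 ^ k) 0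

/-- The Thue–Morse word `t = 0110100110010110⋯`, `t n` being the parity of the
binary digit sum of `n`. -/
def thueMorse : ℕ → Fin 2 := fun n => Fin.ofNat 2 (Nat.digits 2 n).sum

/-- Ultimately periodic infinite words. -/
def UltPeriodic {A : Type*} (x : ℕ → A) : Prop :=
  ∃ p, 1 ≤ p ∧ ∃ N, ∀ n, N ≤ n → x (n + p) = x n

/-! ### Auxiliary lemmas -/

open Fin.NatCast

section TM

lemma tm_zero : thueMorse 0 = 0 := by simp [thueMorse]

lemma tm_even (q : ℕ) : thueMorse (2 * q) = thueMorse q := by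
  rcases Nat.eq_zero_or_pos q with h | h
  · simp [h]
  · have h0 : Nat.digits 2 (2 * q) = (2 * q) % 2 :: Nat.digits 2 (2 * q / 2) :=
      Nat.digits_def' (by norm_num) (by omega)
    have h1 : (2 * q) % 2 = 0 := by omega
    have h2 : 2 * q / 2 = q := by omega
    rw [h1, h2] at h0
    simp [thueMorse, h0]

lemma tm_odd (q : ℕ) : thueMorse (2 * q + 1) = thueMorse q + 1 := by
  have h0 : Nat.digits 2 (2 * q + 1) = (2 * q + 1) % 2 :: Nat.digits 2 ((2 * q + 1) / 2) :=
    Nat.digits_def' (by norm_num) (by omega)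
  have h1 : (2 * q + 1) % 2 = 1 := by omega
  have h2 : (2 * q + 1) / 2 = q := by omega
  rw [h1, h2] at h0
  unfold thueMorse
  rw [Fin.ofNat_eq_cast, Fin.ofNat_eq_cast]
  rw [h0, List.sum_cons, Nat.cast_add, Nat.cast_one, add_comm]

lemma tm1 : thueMorse 1 = 1 := by have := tm_odd 0; simpa [tm_zero] using this
lemma tm2 : thueMorse 2 = 1 := by have := tm_even 1; simpa [tm1] using this
lemma tm3 : thueMorse 3 = 0 := by
  rw [show (3:ℕ) = 2*1+1 by norm_num, tm_odd, tm1]; decide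
lemma tm5 : thueMorse 5 = 0 := by rw [show (5:ℕ) = 2*2+1 by norm_num, tm_odd, tm2]; decide
lemma tm6 : thueMorse 6 = 0 := by rw [show (6:ℕ) = 2*3 by norm_num, tm_even, tm3]

lemma tm_div_mod (k n : ℕ) : thueMorse n = thueMorse (n / 2 ^ k) + thueMorse (n % 2 ^ k) := by
  induction k generalizing n with
  | zero => simp [Nat.mod_one, tm_zero]
  | succ k ih =>
    have h1 : thueMorse n = thueMorse (n / 2) + (↑(n % 2) : Fin 2) := by
      rcases Nat.even_or_odd n with ⟨m, hm⟩ | ⟨m, hm⟩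
      · subst hm; rw [show m + m = 2 * m by ring, tm_even]
        simp [Nat.mul_mod_right, show 2 * m / 2 = m by omega]
      · subst hm; rw [tm_odd]
        simp [Nat.add_mod, show (2 * m + 1) / 2 = m by omega]
    have h2 : n / 2 ^ (k + 1) = (n / 2) / 2 ^ k := by
      rw [Nat.div_div_eq_div_mul]; ring_nf
    have h3 : n % 2 ^ (k + 1) % 2 = n % 2 := by
      rw [pow_succ, mul_comm, Nat.mod_mul_right_mod]
    have h4 : n % 2 ^ (k + 1) / 2 = (n / 2) % 2 ^ k := by
      rw [pow_succ, mul_comm, Nat.mod_mul_right_div_self]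
    have h5 := h1
    rw [ih (n / 2)] at h5
    have h6 : thueMorse (n % 2 ^ (k + 1)) = thueMorse ((n / 2) % 2 ^ k) + (↑(n % 2) : Fin 2) := by
      rcases Nat.even_or_odd (n % 2 ^ (k+1)) with ⟨m, hm⟩ | ⟨m, hm⟩
      · rw [hm, show m + m = 2 * m by ring, tm_even, ← h4, hm]
        have : n % 2 = 0 := by rw [← h3, hm]; omega
        simp [this, show (m + m) / 2 = m by omega]
      · rw [hm, tm_odd, ← h4, hm]
        have : n % 2 = 1 := by rw [← h3, hm]; omega
        simp [this, show (2*m+1)/2 = m by omega]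
    rw [h5, h2, h6]
    rw [add_assoc]

end TM

section Morphism

lemma phi_eq (a : Fin 2) : phi a = [a, a + 1] := by fin_cases a <;> simp [phi]

lemma phiW_cons (a : Fin 2) (u : List (Fin 2)) : phiW (a :: u) = phi a ++ phiW u := by
  simp [phiW]

lemma phiW_append (u v : List (Fin 2)) : phiW (u ++ v) = phiW u ++ phiW v := by
  simp [phiW]

lemma phiW_length (u : List (Fin 2)) : (phiW u).length = 2 * u.length := by
  induction u with
  | nil => simp [phiW]
  | cons a u ih => rw [phiW_cons]; simp [phi_eq] at ih ⊢; omega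

lemma phiPow_succ' (k : ℕ) (u : List (Fin 2)) : phiPow (k+1) u = phiW (phiPow k u) :=
  Function.iterate_succ_apply' phiW k u

lemma phiPow_succ (k : ℕ) (u : List (Fin 2)) : phiPow (k+1) u = phiPow k (phiW u) :=
  Function.iterate_succ_apply phiW k u

lemma phiPow_zero (u : List (Fin 2)) : phiPow 0 u = u := rfl

lemma phiPow_append (k : ℕ) (u v : List (Fin 2)) :
    phiPow k (u ++ v) = phiPow k u ++ phiPow k v := by
  induction k generalizing u v with
  | zero => rfl
  | succ k ih => rw [phiPow_succ', phiPow_succ', phiPow_succ', ih, phiW_append]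

lemma phiPow_length (k : ℕ) (u : List (Fin 2)) :
    (phiPow k u).length = 2 ^ k * u.length := by
  induction k with
  | zero => simp [phiPow_zero]
  | succ k ih => rw [phiPow_succ', phiW_length, ih]; ring

lemma phiW_getD (u : List (Fin 2)) (r : ℕ) (h : r < 2 * u.length) :
    (phiW u).getD r 0 = u.getD (r / 2) 0 + (↑(r % 2) : Fin 2) := by
  induction u generalizing r with
  | nil => simp at h
  | cons a u ih =>
    rw [phiW_cons, phi_eq]
    match r with
    | 0 => simp
    | 1 => simp
    | (s+2) =>
      have hs : s < 2 * u.length := by simp at h; omega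
      have : ([a, a+1] ++ phiW u).getD (s+2) 0 = (phiW u).getD s 0 := by
        simp [List.getD_append_right]
      rw [this, ih s hs]
      have e1 : (s + 2) / 2 = s / 2 + 1 := by omega
      have e2 : (s + 2) % 2 = s % 2 := by omega
      rw [e1, e2]
      simp

lemma phiPow_single_getD (k : ℕ) (a : Fin 2) (r : ℕ) (h : r < 2 ^ k) :
    (phiPow k [a]).getD r 0 = a + thueMorse r := by
  induction k generalizing r with
  | zero =>
    interval_cases r
    simp [phiPow_zero, tm_zero]
  | succ k ih =>
    rw [phiPow_succ']
    have hlen : r < 2 * (phiPow k [a]).length := by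
      rw [phiPow_length]; simp only [List.length_singleton, mul_one]
      rw [pow_succ] at h; omega
    rw [phiW_getD _ _ hlen]
    have hr2 : r / 2 < 2 ^ k := by
      have : r < 2 ^ k * 2 := by rw [← pow_succ]; exact h
      omega
    rw [ih _ hr2]
    rcases Nat.even_or_odd r with ⟨m, hm⟩ | ⟨m, hm⟩
    · have : r = 2 * m := by omega
      subst this
      rw [tm_even]
      simp [show 2 * m / 2 = m by omega, show 2 * m % 2 = 0 by omega, add_assoc]
    · subst hm
      rw [tm_odd]
      simp [show (2 * m + 1) / 2 = m by omega, show (2 * m + 1) % 2 = 1 by omega, add_assoc]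

end Morphism

section Slices

lemma phiPowInf_apply (k : ℕ) (y : ℕ → Fin 2) (n : ℕ) :
    phiPowInf k y n = y (n / 2 ^ k) + thueMorse (n % 2 ^ k) := by
  unfold phiPowInf
  exact phiPow_single_getD k _ _ (Nat.mod_lt _ (Nat.two_pow_pos k))

lemma phiPowInf_tm (k : ℕ) : phiPowInf k thueMorse = thueMorse := by
  funext n
  rw [phiPowInf_apply, ← tm_div_mod]

lemma tmSlice (k : ℕ) (y : ℕ → Fin 2) (m r n : ℕ) (h : r + n ≤ 2 ^ (k + 1)) :
    (List.range n).map (fun s => phiPowInf k y (m * 2 ^ k + r + s))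
      = (((phiPow k [y m] ++ phiPow k [y (m+1)]).drop r).take n) := by
  have hpos : 0 < 2 ^ k := Nat.two_pow_pos k
  have hBlen : (phiPow k [y m] ++ phiPow k [y (m+1)]).length = 2 ^ k + 2 ^ k := by
    simp [phiPow_length]
  have hlen2 : (((phiPow k [y m] ++ phiPow k [y (m+1)]).drop r).take n).length = n := by
    simp [hBlen]
    rw [pow_succ] at h; omega
  apply List.ext_getElem
  · simp [hlen2]
  intro s h1 h2
  simp only [List.getElem_map, List.getElem_range]
  rw [List.getElem_take, List.getElem_drop]
  have hs : s < n := by simpa using h1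
  have hrs : r + s < 2 ^ k + 2 ^ k := by rw [pow_succ] at h; omega
  have hin : r + s < (phiPow k [y m] ++ phiPow k [y (m+1)]).length := by omega
  rw [phiPowInf_apply]
  rcases Nat.lt_or_ge (r + s) (2 ^ k) with hc | hc
  · have hdiv : (m * 2 ^ k + r + s) / 2 ^ k = m := by
      rw [add_assoc, mul_comm, Nat.mul_add_div hpos, Nat.div_eq_of_lt hc, add_zero]
    have hmod : (m * 2 ^ k + r + s) % 2 ^ k = r + s := by
      rw [add_assoc, mul_comm, Nat.mul_add_mod, Nat.mod_eq_of_lt hc]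
    rw [hdiv, hmod]
    have hlt : r + s < (phiPow k [y m]).length := by rw [phiPow_length]; simpa using hc
    rw [List.getElem_append_left hlt]
    rw [← List.getD_eq_getElem _ 0 hlt]
    exact (phiPow_single_getD k _ _ hc).symm
  · have hd : r + s - 2 ^ k < 2 ^ k := by omega
    have hdiv : (m * 2 ^ k + r + s) / 2 ^ k = m + 1 := by
      rw [add_assoc, mul_comm, Nat.mul_add_div hpos]
      have : r + s = 2 ^ k * 1 + (r + s - 2 ^ k) := by omega
      rw [this, Nat.mul_add_div hpos, Nat.div_eq_of_lt hd]
    have hmod : (m * 2 ^ k + r + s) % 2 ^ k = r + s - 2 ^ k := by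
      rw [add_assoc, mul_comm, Nat.mul_add_mod]
      have : r + s = 2 ^ k + (r + s - 2 ^ k) := by omega
      rw [this, Nat.add_mod_left, Nat.mod_eq_of_lt hd]
      omega
    rw [hdiv, hmod]
    have hge : (phiPow k [y m]).length ≤ r + s := by rw [phiPow_length]; simpa using hc
    rw [List.getElem_append_right hge]
    have hlt2 : r + s - (phiPow k [y m]).length < (phiPow k [y (m+1)]).length := by
      rw [phiPow_length]; simp; rw [phiPow_length] at *; simp at *; omega
    rw [← List.getD_eq_getElem _ 0 hlt2]
    have e : r + s - (phiPow k [y m]).length = r + s - 2 ^ k := by rw [phiPow_length]; simp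
    rw [e]
    exact (phiPow_single_getD k _ _ hd).symm

lemma occ_iff (k : ℕ) (y : ℕ → Fin 2) (w : List (Fin 2)) (hwl : w.length ≤ 2 ^ k) :
    FactorOf w (phiPowInf k y) ↔ ∃ m r, r + w.length ≤ 2 ^ (k + 1) ∧
      w = (((phiPow k [y m] ++ phiPow k [y (m+1)]).drop r).take w.length) := by
  have hpos : 0 < 2 ^ k := Nat.two_pow_pos k
  constructor
  · rintro ⟨i, hi⟩
    have hmod := Nat.div_add_mod i (2 ^ k)
    have hmlt : i % 2 ^ k < 2 ^ k := Nat.mod_lt _ hpos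
    refine ⟨i / 2 ^ k, i % 2 ^ k, by rw [pow_succ]; omega, ?_⟩
    have he0 : i / 2 ^ k * 2 ^ k + i % 2 ^ k = i := Nat.div_add_mod' i (2 ^ k)
    have h2 : (List.range w.length).map (fun j => phiPowInf k y (i + j))
        = (List.range w.length).map
            (fun j => phiPowInf k y (i / 2 ^ k * 2 ^ k + i % 2 ^ k + j)) := by
      apply List.map_congr_left
      intro j _
      have : i + j = i / 2 ^ k * 2 ^ k + i % 2 ^ k + j := by omega
      rw [this]
    rw [OccursAt] at hi
    exact hi.trans (h2.trans (tmSlice k y _ _ _ (by rw [pow_succ]; omega)))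
  · rintro ⟨m, r, hr, hw⟩
    refine ⟨m * 2 ^ k + r, ?_⟩
    rw [OccursAt]
    exact hw.trans (tmSlice k y m r w.length hr).symm

end Slices

section Rotation

variable {α : Type*}

lemma take_drop_append (X Y : List α) (j n : ℕ) (h : j + n ≤ X.length) :
    ((X ++ Y).drop j).take n = (X.drop j).take n := by
  have h1 : j - X.length = 0 := by omega
  have h2 : n - (X.drop j).length = 0 := by rw [List.length_drop]; omega
  rw [List.drop_append, List.take_append, h1, h2]
  simp

lemma drop_through (X Y : List α) (j : ℕ) (h : X.length ≤ j) :
    (X ++ Y).drop j = Y.drop (j - X.length) := by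
  rw [List.drop_append, List.drop_eq_nil_of_le h, List.nil_append]

lemma rot (L n r : ℕ) (p q : List α) (hp : p.length = L) (hq : q.length = L)
    (hn : n ≤ 2 * L) (hr : r + n ≤ 4 * L) :
    ∃ r', r' + n ≤ 4 * L ∧
      ((q ++ p ++ q ++ p).drop r').take n = ((p ++ q ++ p ++ q).drop r).take n := by
  have l1 : (q ++ p ++ q).length = 3 * L := by simp [hp, hq]; omega
  have l2 : (p ++ q ++ p).length = 3 * L := by simp [hp, hq]; omega
  rcases le_or_gt L r with h | h
  · have A : ((q ++ p ++ q ++ p).drop (r - L)).take n = ((q ++ p ++ q).drop (r - L)).take n := by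
      have e : q ++ p ++ q ++ p = (q ++ p ++ q) ++ p := by simp [List.append_assoc]
      rw [e]
      exact take_drop_append (q ++ p ++ q) p (r - L) n (by rw [l1]; omega)
    have B : ((p ++ q ++ p ++ q).drop r).take n = ((q ++ p ++ q).drop (r - L)).take n := by
      have e : p ++ q ++ p ++ q = p ++ (q ++ p ++ q) := by simp [List.append_assoc]
      rw [e, drop_through p (q ++ p ++ q) r (by omega), hp]
    exact ⟨r - L, by omega, A.trans B.symm⟩
  · have A : ((q ++ p ++ q ++ p).drop (L + r)).take n = ((p ++ q ++ p).drop r).take n := by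
      have e : q ++ p ++ q ++ p = q ++ (p ++ q ++ p) := by simp [List.append_assoc]
      rw [e, drop_through q (p ++ q ++ p) (L + r) (by omega), hq,
        show L + r - L = r by omega]
    have B : ((p ++ q ++ p ++ q).drop r).take n = ((p ++ q ++ p).drop r).take n := by
      have e : p ++ q ++ p ++ q = (p ++ q ++ p) ++ q := by simp [List.append_assoc]
      rw [e]
      exact take_drop_append (p ++ q ++ p) q r n (by rw [l2]; omega)
    exact ⟨L + r, by omega, A.trans B.symm⟩

end Rotation

section Aperiodic

lemma fin2_cases (a : Fin 2) : a = 0 ∨ a = 1 := by fin_cases a <;> simp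

lemma exists01 {y : ℕ → Fin 2} (hy : ¬ UltPeriodic y) : ∃ m, y m = 0 ∧ y (m+1) = 1 := by
  by_contra h
  push_neg at h
  have step : ∀ m, y m = 0 → y (m + 1) = 0 := by
    intro m hm
    rcases fin2_cases (y (m+1)) with h' | h'
    · exact h'
    · exact absurd h' (h m hm)
  apply hy
  rcases Classical.em (∃ N, y N = 0) with ⟨N, hN⟩ | hno
  · refine ⟨1, le_refl 1, N, ?_⟩
    have all0 : ∀ n, N ≤ n → y n = 0 := by
      intro n hn
      induction n with
      | zero => simpa [Nat.le_zero.mp hn] using hN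
      | succ n ih =>
        rcases Nat.lt_or_ge N (n+1) with h1 | h1
        · exact step n (ih (by omega))
        · have : N = n + 1 := by omega
          rw [← this]; exact hN
    intro n hn
    rw [all0 n hn, all0 (n+1) (by omega)]
  · push_neg at hno
    refine ⟨1, le_refl 1, 0, fun n _ => ?_⟩
    have h1 : ∀ m, y m = 1 := by
      intro m
      rcases fin2_cases (y m) with h' | h'
      · exact absurd h' (hno m)
      · exact h'
    rw [h1, h1]

lemma exists10 {y : ℕ → Fin 2} (hy : ¬ UltPeriodic y) : ∃ m, y m = 1 ∧ y (m+1) = 0 := by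
  by_contra h
  push_neg at h
  have step : ∀ m, y m = 1 → y (m + 1) = 1 := by
    intro m hm
    rcases fin2_cases (y (m+1)) with h' | h'
    · exact absurd h' (h m hm)
    · exact h'
  apply hy
  rcases Classical.em (∃ N, y N = 1) with ⟨N, hN⟩ | hno
  · refine ⟨1, le_refl 1, N, ?_⟩
    have all1 : ∀ n, N ≤ n → y n = 1 := by
      intro n hn
      induction n with
      | zero => simpa [Nat.le_zero.mp hn] using hN
      | succ n ih =>
        rcases Nat.lt_or_ge N (n+1) with h1 | h1
        · exact step n (ih (by omega))
        · have : N = n + 1 := by omega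
          rw [← this]; exact hN
    intro n hn
    rw [all1 n hn, all1 (n+1) (by omega)]
  · push_neg at hno
    refine ⟨1, le_refl 1, 0, fun n _ => ?_⟩
    have h0 : ∀ m, y m = 0 := by
      intro m
      rcases fin2_cases (y m) with h' | h'
      · exact h'
      · exact absurd h' (hno m)
    rw [h0, h0]

lemma existsEq {y : ℕ → Fin 2} (hy : ¬ UltPeriodic y) : ∃ m, y m = y (m+1) := by
  by_contra h
  push_neg at h
  apply hy
  refine ⟨2, by norm_num, 0, fun n _ => ?_⟩
  have key : ∀ a b c : Fin 2, a ≠ b → b ≠ c → c = a := by decide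
  exact key (y n) (y (n+1)) (y (n+2)) (h n) (h (n+1))

end Aperiodic

lemma pair_in_tm (a b : Fin 2) : ∃ m, thueMorse m = a ∧ thueMorse (m+1) = b := by
  fin_cases a <;> fin_cases b
  · exact ⟨5, tm5, tm6⟩
  · exact ⟨0, tm_zero, tm1⟩
  · exact ⟨2, tm2, tm3⟩
  · exact ⟨1, tm1, tm2⟩

lemma factor_nil {A : Type*} (x : ℕ → A) : FactorOf [] x := ⟨0, by simp [OccursAt]⟩

lemma factor_single {A : Type*} (c : A) (x : ℕ → A) :
    FactorOf [c] x ↔ ∃ i, x i = c := by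
  unfold FactorOf OccursAt
  constructor
  · rintro ⟨i, hi⟩
    simp [List.range_succ] at hi
    exact ⟨i, hi.symm⟩
  · rintro ⟨i, hi⟩
    exact ⟨i, by simp [List.range_succ, hi]⟩

theorem phiPow_image_short_factors (k : ℕ) (y : ℕ → Fin 2) (hy : ¬ UltPeriodic y) :
    ∀ n : ℕ, n ≤ 2 ^ k → Fac (phiPowInf k y) n = Fac thueMorse n := by
  intro n hn
  rcases Nat.eq_zero_or_pos k with hk0 | hk1
  · -- k = 0 case : n ≤ 1
    subst hk0
    have hy' : phiPowInf 0 y = y := by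
      funext j
      rw [phiPowInf_apply]
      simp [Nat.div_one, Nat.mod_one, tm_zero]
    rw [hy']
    simp only [pow_zero] at hn
    interval_cases n
    · ext w
      constructor
      · rintro ⟨hl, -⟩
        rw [List.length_eq_zero_iff] at hl
        subst hl
        exact ⟨rfl, factor_nil _⟩
      · rintro ⟨hl, -⟩
        rw [List.length_eq_zero_iff] at hl
        subst hl
        exact ⟨rfl, factor_nil _⟩
    · ext w
      match w with
      | [] => constructor <;> (rintro ⟨hl, -⟩; simp at hl)
      | c :: d :: w' => constructor <;> (rintro ⟨hl, -⟩; simp at hl)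
      | [c] =>
        obtain ⟨m0, h0, h1⟩ := exists01 hy
        constructor
        · rintro ⟨hl, -⟩
          refine ⟨hl, ?_⟩
          rw [factor_single]
          rcases fin2_cases c with hc | hc
          · exact ⟨0, by rw [tm_zero, hc]⟩
          · exact ⟨1, by rw [tm1, hc]⟩
        · rintro ⟨hl, -⟩
          refine ⟨hl, ?_⟩
          rw [factor_single]
          rcases fin2_cases c with hc | hc
          · exact ⟨m0, by rw [h0, hc]⟩
          · exact ⟨m0 + 1, by rw [h1, hc]⟩
  · -- k ≥ 1
    obtain ⟨K, rfl⟩ : ∃ K, k = K + 1 := ⟨k - 1, by omega⟩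
    set k := K + 1 with hk
    ext w
    simp only [Fac, Set.mem_setOf_eq]
    constructor
    · rintro ⟨hl, hf⟩
      refine ⟨hl, ?_⟩
      have hwl : w.length ≤ 2 ^ k := by omega
      rw [← phiPowInf_tm k]
      rw [occ_iff k y w hwl] at hf
      rw [occ_iff k thueMorse w hwl]
      obtain ⟨m, r, hr, hw⟩ := hf
      obtain ⟨m', ht1, ht2⟩ := pair_in_tm (y m) (y (m+1))
      exact ⟨m', r, hr, by rw [ht1, ht2]; exact hw⟩
    · rintro ⟨hl, hf⟩
      refine ⟨hl, ?_⟩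
      have hwl : w.length ≤ 2 ^ k := by omega
      rw [← phiPowInf_tm k] at hf
      rw [occ_iff k thueMorse w hwl] at hf
      rw [occ_iff k y w hwl]
      obtain ⟨m, r, hr, hw⟩ := hf
      -- notation for the half-blocks
      set p : List (Fin 2) := phiPow K [0] with hpdef
      set q : List (Fin 2) := phiPow K [1] with hqdef
      have hp : p.length = 2 ^ K := by rw [hpdef, phiPow_length]; simp
      have hq : q.length = 2 ^ K := by rw [hqdef, phiPow_length]; simp
      have h0 : phiPow k [0] = p ++ q := by
        rw [hk, phiPow_succ]
        have e : phiW [0] = [0] ++ [1] := by simp [phiW, phi]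
        rw [e, phiPow_append]
      have h1 : phiPow k [1] = q ++ p := by
        rw [hk, phiPow_succ]
        have e : phiW [1] = [1] ++ [0] := by simp [phiW, phi]
        rw [e, phiPow_append]
      have hnle : w.length ≤ 2 * 2 ^ K := by
        rw [hk, pow_succ] at hwl; omega
      have hble : 2 ^ (k + 1) = 4 * 2 ^ K := by
        rw [hk, pow_succ, pow_succ]; ring
      rcases fin2_cases (thueMorse m) with ha | ha <;>
        rcases fin2_cases (thueMorse (m+1)) with hb | hb
      · -- pair (0,0)
        rw [ha, hb] at hw
        obtain ⟨m', hm'⟩ := existsEq hy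
        rcases fin2_cases (y m') with hc | hc
        · -- y m' = 0 : same pair
          exact ⟨m', r, hr, by rw [hc, ← hm', hc]; exact hw⟩
        · -- y m' = 1 : rotate
          rw [h0] at hw
          have hw' : w = ((p ++ q ++ p ++ q).drop r).take w.length := by
            rw [show p ++ q ++ p ++ q = (p ++ q) ++ (p ++ q) by simp [List.append_assoc]]
            exact hw
          obtain ⟨r', hr', heq⟩ := rot (2 ^ K) w.length r p q hp hq hnle (by rw [← hble]; omega)
          refine ⟨m', r', by rw [hble]; omega, ?_⟩
          rw [hc, ← hm', hc, h1]
          rw [show (q ++ p) ++ (q ++ p) = q ++ p ++ q ++ p by simp [List.append_assoc]]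
          rw [heq]
          exact hw'
      · -- pair (0,1)
        rw [ha, hb] at hw
        obtain ⟨m', hc0, hc1⟩ := exists01 hy
        exact ⟨m', r, hr, by rw [hc0, hc1]; exact hw⟩
      · -- pair (1,0)
        rw [ha, hb] at hw
        obtain ⟨m', hc0, hc1⟩ := exists10 hy
        exact ⟨m', r, hr, by rw [hc0, hc1]; exact hw⟩
      · -- pair (1,1)
        rw [ha, hb] at hw
        obtain ⟨m', hm'⟩ := existsEq hy
        rcases fin2_cases (y m') with hc | hc
        · -- y m' = 0 : rotate
          rw [h1] at hw
          have hw' : w = ((q ++ p ++ q ++ p).drop r).take w.length := by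
            rw [show q ++ p ++ q ++ p = (q ++ p) ++ (q ++ p) by simp [List.append_assoc]]
            exact hw
          obtain ⟨r', hr', heq⟩ := rot (2 ^ K) w.length r q p hq hp hnle (by rw [← hble]; omega)
          refine ⟨m', r', by rw [hble]; omega, ?_⟩
          rw [hc, ← hm', hc, h0]
          rw [show (p ++ q) ++ (p ++ q) = p ++ q ++ p ++ q by simp [List.append_assoc]]
          rw [heq]
          exact hw'
        · -- y m' = 1 : same pair
          exact ⟨m', r, hr, by rw [hc, ← hm', hc]; exact hw⟩
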